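/- Let n jobs have processing times a_i, b_i ∈ ℕ with 1 ≤ a_i ≤ b_i and a_1 ≤ … ≤ a_n. Define f(k) = min { C(T) : T ⊆ {1,…,n}, |T| = n − k } for 0 ≤ k ≤ n. Then f is strictly decreasing: f(0) > f(1) > … > f(n) = 0. Consequently, the n + 1 pairs (f(k), k), k = 0,…,n, are pairwise non-dominated (Pareto optimal) outcomes for the bicriteria objective of simultaneously minimizing the common due date d and the number of tardy jobs n_T. -/
import Mathlib


/-- The value of the critical path through job `k` when the jobs of `S` are
scheduled in SPT (increasing-index) order:
`∑_{i ∈ S, i ≤ k} a i + ∑_{j ∈ S, j ≥ k} b j`. -/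
def jobVal {n : ℕ} (a b : Fin n → ℕ) (S : Finset (Fin n)) (k : Fin n) : ℕ :=
  ∑ i ∈ S.filter (fun i => i ≤ k), a i + ∑ j ∈ S.filter (fun j => k ≤ j), b j

/-- The makespan of the subset `S` of jobs scheduled in SPT (increasing-index)
order: `C(S) = max_{k ∈ S} (∑_{i ∈ S, i ≤ k} a i + ∑_{j ∈ S, j ≥ k} b j)`,
with `C(∅) = 0`. -/
def makespanOf {n : ℕ} (a b : Fin n → ℕ) (S : Finset (Fin n)) : ℕ :=
  S.sup (jobVal a b S)

/-- Removing any job from a nonempty retained set strictly decreases the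
makespan, since every critical path loses at least `a j` or `b j ≥ 1`. -/
lemma erase_makespan_lt {n : ℕ} (a b : Fin n → ℕ)
    (ha1 : ∀ i, 1 ≤ a i) (hb1 : ∀ i, 1 ≤ b i)
    (S : Finset (Fin n)) (j : Fin n) (hj : j ∈ S) :
    makespanOf a b (S.erase j) < makespanOf a b S := by
  have hjv : 1 ≤ jobVal a b S j := by
    have hjf : j ∈ S.filter (fun i => i ≤ j) := by simp [hj]
    have : a j ≤ ∑ i ∈ S.filter (fun i => i ≤ j), a i :=
      Finset.single_le_sum (fun i _ => Nat.zero_le _) hjf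
    have := ha1 j
    unfold jobVal; omega
  have hpos : 0 < makespanOf a b S :=
    lt_of_lt_of_le hjv (Finset.le_sup hj)
  rw [makespanOf, Finset.sup_lt_iff hpos]
  intro k hk
  have hkj : k ≠ j := Finset.ne_of_mem_erase hk
  have hkS : k ∈ S := Finset.mem_of_mem_erase hk
  have hlt : jobVal a b (S.erase j) k < jobVal a b S k := by
    unfold jobVal
    rw [Finset.filter_erase, Finset.filter_erase]
    rcases lt_or_gt_of_ne hkj with h | h
    · -- k < j : second filter contains j, first does not
      have hj2 : j ∈ S.filter (fun j' => k ≤ j') := by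
        simp [hj, le_of_lt h]
      have hj1 : j ∉ S.filter (fun i => i ≤ k) := by
        simp [not_le.mpr h]
      rw [Finset.erase_eq_of_notMem hj1]
      exact Nat.add_lt_add_left
        (Finset.sum_erase_lt_of_pos hj2 (hb1 j)) _
    · -- j < k
      have hj1 : j ∈ S.filter (fun i => i ≤ k) := by
        simp [hj, le_of_lt h]
      have hj2 : j ∉ S.filter (fun j' => k ≤ j') := by
        simp [not_le.mpr h]
      rw [Finset.erase_eq_of_notMem hj2]
      exact Nat.add_lt_add_right
        (Finset.sum_erase_lt_of_pos hj1 (ha1 j)) _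
  exact lt_of_lt_of_le hlt (Finset.le_sup hkS)

/-- Let `f k` be the minimal makespan over all subsets of
`n - k` retained jobs.  Then `f` is strictly decreasing with `f n = 0`, and
consequently the `n + 1` pairs `(f k, k)` are pairwise non-dominated (Pareto
optimal) outcomes for the bicriteria objective `(d, n_T)`. -/
theorem pareto_front_strictly_decreasing (n : ℕ) (a b : Fin n → ℕ)
    (ha1 : ∀ i, 1 ≤ a i) (hab : ∀ i, a i ≤ b i) (hmono : Monotone a)
    (f : ℕ → ℕ)
    (hf : ∀ k ≤ n,
      (∃ T : Finset (Fin n), T.card = n - k ∧ makespanOf a b T = f k) ∧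
      ∀ T : Finset (Fin n), T.card = n - k → f k ≤ makespanOf a b T) :
    (∀ k < n, f (k + 1) < f k) ∧ f n = 0 ∧
      ∀ k ≤ n, ∀ k' ≤ n,
        ¬(f k ≤ f k' ∧ k ≤ k' ∧ (f k, k) ≠ (f k', k')) := by
  have hb1 : ∀ i, 1 ≤ b i := fun i => (ha1 i).trans (hab i)
  have hdec : ∀ k < n, f (k + 1) < f k := by
    intro k hk
    obtain ⟨⟨T, hTcard, hTms⟩, _⟩ := hf k hk.le
    have hTne : T.Nonempty := by
      rw [← Finset.card_pos, hTcard]; omega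
    obtain ⟨j, hj⟩ := hTne
    have hcard : (T.erase j).card = n - (k + 1) := by
      rw [Finset.card_erase_of_mem hj, hTcard]; omega
    have h1 := (hf (k + 1) hk).2 (T.erase j) hcard
    calc f (k + 1) ≤ makespanOf a b (T.erase j) := h1
      _ < makespanOf a b T := erase_makespan_lt a b ha1 hb1 T j hj
      _ = f k := hTms
  have hfn : f n = 0 := by
    have h := (hf n le_rfl).2 ∅ (by simp)
    simpa [makespanOf] using h
  refine ⟨hdec, hfn, ?_⟩
  have key : ∀ k' k, k < k' → k' ≤ n → f k' < f k := by
    intro k'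
    induction k' with
    | zero => omega
    | succ m ih =>
      intro k hlt hle
      rcases Nat.lt_or_ge k m with h | h
      · exact (hdec m (by omega)).trans (ih k h (by omega))
      · have : k = m := by omega
        subst this
        exact hdec k (by omega)
  rintro k hk k' hk' ⟨h1, h2, h3⟩
  rcases Nat.lt_or_ge k k' with h | h
  · exact absurd h1 (not_le.mpr (key k' k h hk'))
  · have hkk : k = k' := le_antisymm h2 h
    exact h3 (by rw [hkk])
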